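/- Let F: ℝⁿ → ℝ be C¹ on ℝⁿ and C² on ℝⁿ∖{0}, and let φ':(0,∞)→(0,∞) satisfy (Inc)_{p−1} and (Dec)_{q−1} for some 1 < p ≤ q. Suppose the Hessian satisfies D²F(ξ) η · η ≥ ν (φ'(|ξ|)/|ξ|) |η|² for all ξ ≠ 0, η ∈ ℝⁿ, with ν > 0. Then for all ξ₁, ξ₂ ∈ ℝⁿ (not both zero), F(ξ₁) − F(ξ₂) − D F(ξ₂) · (ξ₁ − ξ₂) ≥ c (φ'(|ξ₁|+|ξ₂|)/(|ξ₁|+|ξ₂|)) |ξ₁ − ξ₂|², where c > 0 depends only on ν, p, q. -/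

import Mathlib

open Set Filter Topology

/-- Uniform convexity estimate: if the Hessian of `F` satisfies
`D²F(ξ) η·η ≥ ν (φ'(|ξ|)/|ξ|) |η|²` with `φ'` satisfying (Inc)_{p−1} and
(Dec)_{q−1}, then `F(ξ₁) − F(ξ₂) − DF(ξ₂)·(ξ₁−ξ₂) ≥
c (φ'(|ξ₁|+|ξ₂|)/(|ξ₁|+|ξ₂|)) |ξ₁ − ξ₂|²` with `c = c(ν,p,q) > 0`. -/
private lemma mvt_ge {f f' : ℝ → ℝ} {a b C : ℝ} (hab : a < b)
    (hf : ∀ t ∈ Set.Icc a b, HasDerivAt f (f' t) t)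
    (hC : ∀ t ∈ Set.Ioo a b, C ≤ f' t) :
    C * (b - a) ≤ f b - f a := by
  obtain ⟨c, hc, hceq⟩ := exists_hasDerivAt_eq_slope f f' hab
    (fun t ht => (hf t ht).continuousAt.continuousWithinAt)
    (fun t ht => hf t (Set.Ioo_subset_Icc_self ht))
  have h1 := hC c hc
  rw [hceq, le_div_iff₀ (by linarith)] at h1
  linarith

private lemma left_endpoint_le {f f' : ℝ → ℝ} {a b : ℝ} (hab : a < b)
    (hf : ∀ t ∈ Set.Icc a b, HasDerivAt f (f' t) t)
    (mono : ∀ x ∈ Set.Ioo a b, ∀ y ∈ Set.Ioo a b, x ≤ y → f' x ≤ f' y) :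
    ∀ y ∈ Set.Ioo a b, f' a ≤ f' y := by
  intro y hy
  have T : Tendsto (slope f a) (𝓝[>] a) (𝓝 (f' a)) :=
    (hasDerivAt_iff_tendsto_slope.mp (hf a ⟨le_refl a, hab.le⟩)).mono_left
      (nhdsWithin_mono a fun u hu => ne_of_gt hu)
  refine le_of_tendsto T ?_
  filter_upwards [Ioo_mem_nhdsGT_of_mem ⟨le_refl a, hy.1⟩] with u hu
  have hub : u ≤ b := le_trans hu.2.le hy.2.le
  obtain ⟨c, hc, hceq⟩ := exists_hasDerivAt_eq_slope f f' hu.1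
    (fun t ht => (hf t ⟨ht.1, ht.2.trans hub⟩).continuousAt.continuousWithinAt)
    (fun t ht => hf t ⟨ht.1.le, ht.2.le.trans hub⟩)
  have : slope f a u = f' c := by rw [hceq]; simp [slope_def_field]
  rw [this]
  exact mono c ⟨hc.1, by linarith [hc.2, hu.2, hy.2]⟩ y hy (by linarith [hc.2, hu.2])

private lemma right_endpoint_ge {f f' : ℝ → ℝ} {a b : ℝ} (hab : a < b)
    (hf : ∀ t ∈ Set.Icc a b, HasDerivAt f (f' t) t)
    (mono : ∀ x ∈ Set.Ioo a b, ∀ y ∈ Set.Ioo a b, x ≤ y → f' x ≤ f' y) :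
    ∀ x ∈ Set.Ioo a b, f' x ≤ f' b := by
  intro x hx
  have T : Tendsto (slope f b) (𝓝[<] b) (𝓝 (f' b)) :=
    (hasDerivAt_iff_tendsto_slope.mp (hf b ⟨hab.le, le_refl b⟩)).mono_left
      (nhdsWithin_mono b fun u hu => ne_of_lt hu)
  refine ge_of_tendsto T ?_
  filter_upwards [Ioo_mem_nhdsLT_of_mem ⟨hx.2, le_refl b⟩] with u hu
  have hau : a ≤ u := le_trans hx.1.le hu.1.le
  obtain ⟨c, hc, hceq⟩ := exists_hasDerivAt_eq_slope f f' hu.2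
    (fun t ht => (hf t ⟨hau.trans ht.1, ht.2⟩).continuousAt.continuousWithinAt)
    (fun t ht => hf t ⟨hau.trans ht.1.le, ht.2.le⟩)
  have : slope f b u = f' c := by rw [hceq, slope_comm]; simp [slope_def_field]
  rw [this]
  exact mono x hx c ⟨by linarith [hc.1, hu.1, hx.1], hc.2⟩ (by linarith [hc.1, hu.1])

set_option maxHeartbeats 1000000 in
theorem stmt17 (ν p q : ℝ) (hν : 0 < ν) (hp : 1 < p) (hpq : p ≤ q) :
    ∃ c : ℝ, 0 < c ∧
      ∀ (n : ℕ) (F : EuclideanSpace ℝ (Fin n) → ℝ)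
        (F' : EuclideanSpace ℝ (Fin n) → (EuclideanSpace ℝ (Fin n) →L[ℝ] ℝ))
        (F'' : EuclideanSpace ℝ (Fin n) →
          (EuclideanSpace ℝ (Fin n) →L[ℝ] EuclideanSpace ℝ (Fin n) →L[ℝ] ℝ))
        (φ' : ℝ → ℝ),
        (∀ ξ, HasFDerivAt F (F' ξ) ξ) →
        (∀ ξ, ξ ≠ 0 → HasFDerivAt F' (F'' ξ) ξ) →
        (∀ t : ℝ, 0 < t → 0 < φ' t) →
        (∀ s t : ℝ, 0 < s → s ≤ t →
          φ' s / s ^ (p - 1) ≤ φ' t / t ^ (p - 1)) →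
        (∀ s t : ℝ, 0 < s → s ≤ t →
          φ' t / t ^ (q - 1) ≤ φ' s / s ^ (q - 1)) →
        (∀ ξ, ξ ≠ 0 → ∀ η : EuclideanSpace ℝ (Fin n),
          ν * (φ' ‖ξ‖ / ‖ξ‖) * ‖η‖ ^ 2 ≤ F'' ξ η η) →
        ∀ ξ₁ ξ₂ : EuclideanSpace ℝ (Fin n), ¬(ξ₁ = 0 ∧ ξ₂ = 0) →
          c * (φ' (‖ξ₁‖ + ‖ξ₂‖) / (‖ξ₁‖ + ‖ξ₂‖)) * ‖ξ₁ - ξ₂‖ ^ 2 ≤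
            F ξ₁ - F ξ₂ - F' ξ₂ (ξ₁ - ξ₂) := by
  have hq0 : (0:ℝ) ≤ q := by linarith
  have h4pos : (0:ℝ) < (1/4 : ℝ) ^ q := Real.rpow_pos_of_pos (by norm_num) q
  refine ⟨ν * (1/4 : ℝ) ^ q / 64, by positivity, ?_⟩
  intro n F F' F'' φ' hF hF' hφ hInc hDec hHess ξ₁ ξ₂ hne
  by_cases hξ : ξ₁ = ξ₂
  · subst hξ
    simp
  set R : ℝ := ‖ξ₁‖ + ‖ξ₂‖ with hRdef
  have hR : 0 < R := by
    rcases not_and_or.mp hne with h1 | h1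
    · have h2 := norm_pos_iff.mpr h1
      have h3 := norm_nonneg ξ₂
      linarith
    · have h2 := norm_pos_iff.mpr h1
      have h3 := norm_nonneg ξ₁
      linarith
  have hφR : 0 < φ' R := hφ R hR
  set v : EuclideanSpace ℝ (Fin n) := ξ₁ - ξ₂ with hvdef
  have hvne : v ≠ 0 := sub_ne_zero.mpr hξ
  have hvR : ‖v‖ ≤ R := norm_sub_le _ _
  set γ : ℝ → EuclideanSpace ℝ (Fin n) := fun t => ξ₂ + t • v with hγdef
  set ψ : ℝ → ℝ := fun t => F (γ t) - t * (F' ξ₂ v) with hψdef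
  set ψd : ℝ → ℝ := fun t => F' (γ t) v - F' ξ₂ v with hψddef
  set ψdd : ℝ → ℝ := fun t => F'' (γ t) v v with hψdddef
  have dγ : ∀ t : ℝ, HasDerivAt γ v t := by
    intro t
    simpa [hγdef] using (((hasDerivAt_id t).smul_const v).const_add ξ₂)
  have d1 : ∀ t : ℝ, HasDerivAt ψ (ψd t) t := by
    intro t
    have h1 : HasDerivAt (fun s => F (γ s)) (F' (γ t) v) t :=
      (hF (γ t)).comp_hasDerivAt t (dγ t)
    simpa [hψdef, hψddef] using h1.fun_sub ((hasDerivAt_id t).mul_const (F' ξ₂ v))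
  have d2 : ∀ t : ℝ, γ t ≠ 0 → HasDerivAt ψd (ψdd t) t := by
    intro t ht
    have heval : HasFDerivAt (fun ζ : EuclideanSpace ℝ (Fin n) => F' ζ v)
        ((ContinuousLinearMap.apply ℝ ℝ v).comp (F'' (γ t))) (γ t) :=
      ((ContinuousLinearMap.apply ℝ ℝ v).hasFDerivAt).comp (γ t) (hF' (γ t) ht)
    have h1 : HasDerivAt (fun s => F' (γ s) v) (F'' (γ t) v v) t := by
      simpa [Function.comp_def] using heval.comp_hasDerivAt t (dγ t)
    simpa [hψddef, hψdddef] using h1.sub_const (F' ξ₂ v)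
  have hψdd_nonneg : ∀ t : ℝ, γ t ≠ 0 → 0 ≤ ψdd t := by
    intro t ht
    have h1 := hHess (γ t) ht v
    have h2 : 0 < ‖γ t‖ := norm_pos_iff.mpr ht
    have h3 : 0 < φ' ‖γ t‖ := hφ _ h2
    have h4 : 0 ≤ ν * (φ' ‖γ t‖ / ‖γ t‖) * ‖v‖ ^ 2 := by positivity
    exact h4.trans h1
  have hzero_unique : ∀ s t : ℝ, γ s = 0 → γ t = 0 → s = t := by
    intro s t hs ht
    have h1 : γ s - γ t = (s - t) • v := by
      simp only [hγdef, sub_smul]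
      abel
    rw [hs, ht, sub_self] at h1
    rcases smul_eq_zero.mp h1.symm with h | h
    · linarith [sub_eq_zero.mp h]
    · exact absurd h hvne
  have mono_piece : ∀ x y : ℝ, x ≤ y → (∀ t ∈ Icc x y, γ t ≠ 0) → ψd x ≤ ψd y := by
    intro x y hxy hnz
    rcases eq_or_lt_of_le hxy with rfl | hlt
    · exact le_refl _
    · have h1 := mvt_ge (C := 0) hlt (fun t ht => d2 t (hnz t ht))
        (fun t ht => hψdd_nonneg t (hnz t (Ioo_subset_Icc_self ht)))
      linarith
  have mono01 : ∀ x ∈ Ioo (0:ℝ) 1, ∀ y ∈ Ioo (0:ℝ) 1, x ≤ y → ψd x ≤ ψd y := by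
    by_cases hbad : ∃ t ∈ Ioo (0:ℝ) 1, γ t = 0
    · obtain ⟨t₀, ht₀, hz⟩ := hbad
      have pieceL : ∀ x ∈ Ioo (0:ℝ) t₀, ∀ y ∈ Ioo (0:ℝ) t₀, x ≤ y → ψd x ≤ ψd y := by
        intro x hx y hy hxy
        refine mono_piece x y hxy (fun t ht h0 => ?_)
        have := hzero_unique t t₀ h0 hz
        linarith [ht.2, hy.2]
      have pieceR : ∀ x ∈ Ioo t₀ (1:ℝ), ∀ y ∈ Ioo t₀ (1:ℝ), x ≤ y → ψd x ≤ ψd y := by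
        intro x hx y hy hxy
        refine mono_piece x y hxy (fun t ht h0 => ?_)
        have := hzero_unique t t₀ h0 hz
        linarith [ht.1, hx.1]
      have hL : ∀ x ∈ Ioo (0:ℝ) t₀, ψd x ≤ ψd t₀ :=
        right_endpoint_ge ht₀.1 (fun t _ => d1 t) pieceL
      have hRg : ∀ y ∈ Ioo t₀ (1:ℝ), ψd t₀ ≤ ψd y :=
        left_endpoint_le ht₀.2 (fun t _ => d1 t) pieceR
      intro x hx y hy hxy
      rcases lt_trichotomy y t₀ with h | h | h
      · exact pieceL x ⟨hx.1, lt_of_le_of_lt hxy h⟩ y ⟨lt_of_lt_of_le hx.1 hxy, h⟩ hxy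
      · rcases lt_trichotomy x t₀ with h2 | h2 | h2
        · exact h ▸ hL x ⟨hx.1, h2⟩
        · rw [h2, h]
        · linarith
      · rcases lt_trichotomy x t₀ with h2 | h2 | h2
        · exact (hL x ⟨hx.1, h2⟩).trans (hRg y ⟨h, hy.2⟩)
        · exact h2 ▸ hRg y ⟨h, hy.2⟩
        · exact pieceR x ⟨h2, hx.2⟩ y ⟨h, hy.2⟩ hxy
    · push_neg at hbad
      intro x hx y hy hxy
      exact mono_piece x y hxy
        (fun t ht => hbad t ⟨lt_of_lt_of_le hx.1 ht.1, lt_of_le_of_lt ht.2 hy.2⟩)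
  have hψd0 : ψd 0 = 0 := by simp [hψddef, hγdef]
  have ψd_nonneg : ∀ x ∈ Ioo (0:ℝ) 1, 0 ≤ ψd x := by
    intro x hx
    have h1 := left_endpoint_le one_pos (fun t _ => d1 t) mono01 x hx
    rwa [hψd0] at h1
  have hr_le : ∀ t ∈ Icc (0:ℝ) 1, ‖γ t‖ ≤ R := by
    intro t ht
    have e : γ t = (1 - t) • ξ₂ + t • ξ₁ := by
      simp only [hγdef, hvdef, smul_sub, sub_smul, one_smul]
      abel
    rw [e]
    refine (norm_add_le _ _).trans ?_
    rw [norm_smul, norm_smul, Real.norm_eq_abs, Real.norm_eq_abs,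
      abs_of_nonneg (by linarith [ht.2] : (0:ℝ) ≤ 1 - t), abs_of_nonneg ht.1]
    nlinarith [norm_nonneg ξ₁, norm_nonneg ξ₂, ht.1, ht.2]
  have hphi : ∀ s : ℝ, R/4 ≤ s → s ≤ R → (1/4:ℝ)^q * (φ' R / R) ≤ φ' s / s := by
    intro s hs4 hsR
    have hs0 : 0 < s := by linarith
    have hRq : 0 < R ^ (q - 1) := Real.rpow_pos_of_pos hR _
    have hsq : 0 < s ^ (q - 1) := Real.rpow_pos_of_pos hs0 _
    have h1 : φ' R * s ^ (q-1) ≤ φ' s * R ^ (q-1) := by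
      have h2 := hDec s R hs0 hsR
      rw [div_le_div_iff₀ hRq hsq] at h2
      linarith
    set x : ℝ := s / R with hxdef
    have hx0 : 0 < x := by positivity
    have hx1 : x ≤ 1 := by rw [hxdef, div_le_one hR]; exact hsR
    have hx4 : (1/4:ℝ) ≤ x := by rw [hxdef, le_div_iff₀ hR]; linarith
    have hq2 : (1/4:ℝ)^q ≤ x ^ (q - 2) :=
      (Real.rpow_le_rpow (by norm_num) hx4 hq0).trans
        (Real.rpow_le_rpow_of_exponent_ge hx0 hx1 (by linarith))
    have e : x ^ (q - 2) = (s ^ (q-1) * R) / (s * R ^ (q-1)) := by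
      rw [hxdef, Real.div_rpow hs0.le hR.le]
      rw [show q - 2 = (q - 1) - 1 by ring, Real.rpow_sub hs0, Real.rpow_sub hR, Real.rpow_one]
      field_simp
      simp
    rw [e, le_div_iff₀ (by positivity)] at hq2
    -- hq2 : 1/4^q * (s * R^(q-1)) ≤ s^(q-1) * R
    rw [← mul_div_assoc, div_le_div_iff₀ hR hs0]
    -- goal : (1/4)^q * φ' R * s ≤ φ' s * R
    have c1 : (1/4:ℝ)^q * (s * R^(q-1)) * φ' R ≤ s^(q-1) * R * φ' R :=
      mul_le_mul_of_nonneg_right hq2 hφR.le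
    have c2 : φ' R * s^(q-1) * R ≤ φ' s * R^(q-1) * R :=
      mul_le_mul_of_nonneg_right h1 hR.le
    have c3 : (1/4:ℝ)^q * φ' R * s * R^(q-1) ≤ φ' s * R * R^(q-1) := by nlinarith [c1, c2]
    exact le_of_mul_le_mul_right c3 hRq
  set m : ℝ := ν * ((1/4:ℝ)^q * (φ' R / R)) * ‖v‖^2 with hmdef
  have hm_nonneg : 0 ≤ m := by
    have h1 : 0 < φ' R / R := div_pos hφR hR
    rw [hmdef]
    positivity
  have hm_le : ∀ t : ℝ, R/4 ≤ ‖γ t‖ → ‖γ t‖ ≤ R → m ≤ ψdd t := by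
    intro t h1 h2
    have hne0 : γ t ≠ 0 := by
      intro h0
      rw [h0, norm_zero] at h1
      linarith
    have h3 := hHess (γ t) hne0 v
    have h4 := hphi ‖γ t‖ h1 h2
    refine le_trans ?_ h3
    rw [hmdef]
    exact mul_le_mul_of_nonneg_right (mul_le_mul_of_nonneg_left h4 hν.le) (sq_nonneg _)
  have hψ1 : ψ 1 = F ξ₁ - F' ξ₂ v := by simp [hψdef, hγdef, hvdef]
  have hψ0 : ψ 0 = F ξ₂ := by simp [hψdef, hγdef]
  have key : m / 64 ≤ ψ 1 - ψ 0 := by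
    rcases le_or_gt (R/2) ‖ξ₂‖ with hcase | hcase
    · -- Case A : good interval [0, 1/4]
      have goodA : ∀ t ∈ Icc (0:ℝ) (1/4 : ℝ), R/4 ≤ ‖γ t‖ := by
        intro t ht
        have e : ξ₂ = γ t - t • v := by simp [hγdef]
        have h1 : ‖ξ₂‖ ≤ ‖γ t‖ + ‖t • v‖ := by rw [e]; exact norm_sub_le _ _
        rw [norm_smul, Real.norm_eq_abs, abs_of_nonneg ht.1] at h1
        nlinarith [mul_le_mul ht.2 hvR (norm_nonneg v) (by norm_num : (0:ℝ) ≤ 1/4)]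
      have hIcc : Icc (1/8 : ℝ) (1/4) ⊆ Icc (0:ℝ) (1/4) :=
        Icc_subset_Icc (by norm_num) (le_refl _)
      have step1 : m / 8 ≤ ψd (1/4 : ℝ) := by
        have hmvt := mvt_ge (C := m) (show (1/8:ℝ) < 1/4 by norm_num)
          (fun t ht => d2 t (fun h0 => by
            have := goodA t (hIcc ht); rw [h0, norm_zero] at this; linarith))
          (fun t ht => hm_le t (goodA t (hIcc (Ioo_subset_Icc_self ht)))
            (hr_le t ⟨by linarith [ht.1], by linarith [ht.2]⟩))
        have h0 : 0 ≤ ψd (1/8 : ℝ) := ψd_nonneg _ ⟨by norm_num, by norm_num⟩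
        linarith
      have step3 : m/8 * (1 - 1/4) ≤ ψ 1 - ψ (1/4 : ℝ) := by
        refine mvt_ge (by norm_num) (fun t _ => d1 t) (fun t ht => ?_)
        exact step1.trans (mono01 (1/4) ⟨by norm_num, by norm_num⟩ t
          ⟨by linarith [ht.1], ht.2⟩ ht.1.le)
      have step4 : (0:ℝ) * (1/4 - 0) ≤ ψ (1/4 : ℝ) - ψ 0 := by
        refine mvt_ge (by norm_num) (fun t _ => d1 t) (fun t ht => ?_)
        exact ψd_nonneg t ⟨ht.1, by linarith [ht.2]⟩
      linarith
    · -- Case B : good interval [3/4, 1]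
      have hξ1 : R/2 ≤ ‖ξ₁‖ := by
        simp only [hRdef] at hcase ⊢
        linarith
      have goodB : ∀ t ∈ Icc (3/4:ℝ) 1, R/4 ≤ ‖γ t‖ := by
        intro t ht
        have e : ξ₁ = γ t + (1 - t) • v := by
          simp only [hγdef, hvdef, sub_smul, one_smul]
          abel
        have h1 : ‖ξ₁‖ ≤ ‖γ t‖ + ‖(1 - t) • v‖ := by rw [e]; exact norm_add_le _ _
        rw [norm_smul, Real.norm_eq_abs, abs_of_nonneg (by linarith [ht.2] : (0:ℝ) ≤ 1 - t)] at h1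
        nlinarith [mul_le_mul (by linarith [ht.1] : (1:ℝ) - t ≤ 1/4) hvR (norm_nonneg v)
          (by norm_num : (0:ℝ) ≤ 1/4)]
      have hIcc : Icc (3/4:ℝ) (7/8) ⊆ Icc (3/4:ℝ) 1 :=
        Icc_subset_Icc (le_refl _) (by norm_num)
      have step1 : m / 8 ≤ ψd (7/8 : ℝ) := by
        have hmvt := mvt_ge (C := m) (show (3/4:ℝ) < 7/8 by norm_num)
          (fun t ht => d2 t (fun h0 => by
            have := goodB t (hIcc ht); rw [h0, norm_zero] at this; linarith))
          (fun t ht => hm_le t (goodB t (hIcc (Ioo_subset_Icc_self ht)))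
            (hr_le t ⟨by linarith [ht.1], by linarith [ht.2]⟩))
        have h0 : 0 ≤ ψd (3/4 : ℝ) := ψd_nonneg _ ⟨by norm_num, by norm_num⟩
        linarith
      have step3 : m/8 * (1 - 7/8) ≤ ψ 1 - ψ (7/8 : ℝ) := by
        refine mvt_ge (by norm_num) (fun t _ => d1 t) (fun t ht => ?_)
        exact step1.trans (mono01 (7/8) ⟨by norm_num, by norm_num⟩ t
          ⟨by linarith [ht.1], ht.2⟩ ht.1.le)
      have step4 : (0:ℝ) * (7/8 - 0) ≤ ψ (7/8 : ℝ) - ψ 0 := by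
        refine mvt_ge (by norm_num) (fun t _ => d1 t) (fun t ht => ?_)
        exact ψd_nonneg t ⟨ht.1, by linarith [ht.2]⟩
      linarith
  have hceq : ν * (1/4:ℝ)^q / 64 * (φ' R / R) * ‖v‖^2 = m / 64 := by
    rw [hmdef]; ring
  rw [hceq]
  rw [hψ1, hψ0] at key
  linarith [key]
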